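/- Assume α ≠ 1, β ≠ 1 and α ≠ β. Every algebra homomorphism θ : O_{α,β}(GL_n) → k satisfies θ(x_{ij}) = 0 for all i ≠ j and θ(x_{ii}) ∈ k^× for all i, and the map sending a diagonal matrix Λ = diag(λ_1, …, λ_n) ∈ (k^×)^n to the character x_{ij} ↦ δ_{ij} λ_i is a group isomorphism from the diagonal torus (k^×)^n onto the group Alg(O_{α,β}(GL_n), k) of characters with the convolution product. -/

import Mathlib

open scoped TensorProduct

noncomputable section

universe u v

/-- The number of inversions (the length) of a permutation of `Fin n`. -/
def permLength {n : ℕ} (σ : Equiv.Perm (Fin n)) : ℕ :=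
  (Finset.univ.filter fun p : Fin n × Fin n => p.1 < p.2 ∧ σ p.2 < σ p.1).card

/-- The defining relations of the two-parameter quantum matrix bialgebra
`O_{α,β}(M_n)`, for a family `x i j` of elements of a `k`-algebra `A`. -/
def QMRel {k : Type u} [Field k] {A : Type v} [Ring A] [Algebra k A]
    (n : ℕ) (α β : k) (x : Fin n → Fin n → A) : Prop :=
  (∀ i j l : Fin n, j < l → x i l * x i j = α⁻¹ • (x i j * x i l)) ∧
  (∀ i j l : Fin n, i < j → x j l * x i l = β • (x i l * x j l)) ∧
  (∀ i j l m : Fin n, i < j → l < m → x j l * x i m = (β * α) • (x i m * x j l)) ∧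
  (∀ i j l m : Fin n, i < j → l < m →
    x j m * x i l - x i l * x j m = (β - α) • (x i m * x j l))

/-- The quantum determinant `g = ∑_σ (-β)^{-ℓ(σ)} x_{σ(1),1} ⋯ x_{σ(n),n}`. -/
def qdet {k : Type u} [Field k] {A : Type v} [Ring A] [Algebra k A]
    (n : ℕ) (β : k) (x : Fin n → Fin n → A) : A :=
  ∑ σ : Equiv.Perm (Fin n),
    ((-β)⁻¹ ^ permLength σ) • ((List.finRange n).map fun i => x (σ i) i).prod


lemma permLength_one {n : ℕ} : permLength (1 : Equiv.Perm (Fin n)) = 0 := by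
  rw [permLength, Finset.card_eq_zero, Finset.filter_eq_empty_iff]
  rintro p -
  rintro ⟨h1, h2⟩
  simp only [Equiv.Perm.coe_one, id_eq] at h2
  exact absurd (h1.trans h2) (lt_irrefl _)

lemma exists_inversion {n : ℕ} (σ : Equiv.Perm (Fin n)) (hσ : σ ≠ 1) :
    ∃ l m : Fin n, l < m ∧ σ m < σ l := by
  by_contra h
  push_neg at h
  have hmono : StrictMono σ := fun a b hab =>
    (h a b hab).lt_of_ne fun he => absurd (σ.injective he) hab.ne
  apply hσ
  have hmono' : StrictMono ⇑σ⁻¹ := fun a b hab => by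
    rw [← hmono.lt_iff_lt, Equiv.Perm.coe_inv, Equiv.apply_symm_apply, Equiv.apply_symm_apply]
    exact hab
  ext i
  have h1 : i ≤ σ i := @StrictMono.le_apply (Fin n) (inferInstance : LinearOrder (Fin n))
    (inferInstance : WellFoundedLT (Fin n)) (⇑σ) hmono i
  have h2 : i ≤ σ⁻¹ i := @StrictMono.le_apply (Fin n) (inferInstance : LinearOrder (Fin n))
    (inferInstance : WellFoundedLT (Fin n)) (⇑σ⁻¹) hmono' i
  have h3 : σ i ≤ σ (σ⁻¹ i) := hmono.monotone h2
  rw [Equiv.Perm.coe_inv, Equiv.apply_symm_apply] at h3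
  exact le_antisymm h3 h1

lemma map_QMRel {k : Type u} [Field k] {A : Type*} {B : Type*} [Ring A] [Algebra k A]
    [Ring B] [Algebra k B] {n : ℕ} {α β : k} {x : Fin n → Fin n → A}
    {F : Type*} [FunLike F A B] [AlgHomClass F k A B] (f : F)
    (h : QMRel n α β x) : QMRel n α β (fun i j => f (x i j)) := by
  obtain ⟨h1, h2, h3, h4⟩ := h
  refine ⟨fun i j l hjl => ?_, fun i j l hij => ?_, fun i j l m hij hlm => ?_,
    fun i j l m hij hlm => ?_⟩
  · rw [← map_mul, ← map_mul, h1 i j l hjl, map_smul]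
  · rw [← map_mul, ← map_mul, h2 i j l hij, map_smul]
  · rw [← map_mul, ← map_mul, h3 i j l m hij hlm, map_smul]
  · rw [← map_mul, ← map_mul, ← map_sub, h4 i j l m hij hlm, map_smul, map_mul]

lemma map_qdet {k : Type u} [Field k] {A : Type*} {B : Type*} [Ring A] [Algebra k A]
    [Ring B] [Algebra k B] {n : ℕ} {β : k} (x : Fin n → Fin n → A)
    {F : Type*} [FunLike F A B] [AlgHomClass F k A B] (f : F) :
    f (qdet n β x) = qdet n β (fun i j => f (x i j)) := by
  simp only [qdet, map_sum, map_smul, map_list_prod, List.map_map, Function.comp_def]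

lemma diag_QMRel {k : Type u} [Field k] (n : ℕ) (α β : k) (d : Fin n → k) :
    QMRel n α β (fun i j => if i = j then d i else 0) := by
  refine ⟨fun i j l hjl => ?_, fun i j l hij => ?_, fun i j l m hij hlm => ?_,
    fun i j l m hij hlm => ?_⟩
  · by_cases hij : i = j
    · have hil : i ≠ l := by subst hij; exact hjl.ne
      simp [hil]
    · simp [hij]
  · by_cases hjl : j = l
    · have hil : i ≠ l := by subst hjl; exact hij.ne
      simp [hil]
    · simp [hjl]
  · by_cases hjl : j = l
    · have him : i ≠ m := by subst hjl; exact fun h => absurd (hij.trans (h ▸ hlm)) (lt_irrefl _)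
      simp [him]
    · simp [hjl]
  · rw [mul_comm, sub_self]
    by_cases him : i = m
    · have hjl : j ≠ l := by subst him; exact fun h => absurd (hij.trans (h ▸ hlm)) (lt_irrefl _)
      simp [hjl]
    · simp [him]

lemma diag_qdet {k : Type u} [Field k] (n : ℕ) (β : k) (d : Fin n → k) :
    qdet n β (fun i j => if i = j then d i else 0) = ∏ i, d i := by
  rw [qdet, Finset.sum_eq_single (1 : Equiv.Perm (Fin n))]
  · rw [permLength_one, pow_zero, one_smul, ← Fin.prod_univ_def]
    simp
  · intro σ _ hσ
    rw [← Fin.prod_univ_def]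
    obtain ⟨i, hi⟩ : ∃ i, σ i ≠ i := by
      by_contra h
      push_neg at h
      exact hσ (Equiv.ext h)
    have hz : (∏ j : Fin n, if σ j = j then d (σ j) else 0) = 0 :=
      Finset.prod_eq_zero (Finset.mem_univ i) (if_neg hi)
    rw [hz, smul_zero]
  · simp

lemma char_diag {k : Type u} [Field k] {n : ℕ} {α β : k}
    (hα1 : α ≠ 1) (hαβ : α ≠ β)
    {t : Fin n → Fin n → k} (ht : QMRel n α β t) (hu : IsUnit (qdet n β t)) :
    (∀ i j, i ≠ j → t i j = 0) ∧ ∀ i, t i i ≠ 0 := by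
  have hinv : (1 : k) - α⁻¹ ≠ 0 := sub_ne_zero.mpr fun h => hα1 (inv_eq_one.mp h.symm)
  have hrow : ∀ i j l, j < l → t i j * t i l = 0 := by
    intro i j l hjl
    have h := ht.1 i j l hjl
    rw [smul_eq_mul, mul_comm (t i l)] at h
    have h3 : ((1 : k) - α⁻¹) * (t i j * t i l) = 0 := by
      rw [sub_mul, one_mul, sub_eq_zero]
      exact h
    exact (mul_eq_zero.mp h3).resolve_left hinv
  have hanti : ∀ i j l m, i < j → l < m → t i m * t j l = 0 := by
    intro i j l m hij hlm
    have h := ht.2.2.2 i j l m hij hlm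
    rw [mul_comm, sub_self, smul_eq_mul] at h
    exact (mul_eq_zero.mp h.symm).resolve_left (sub_ne_zero.mpr fun h' => hαβ h'.symm)
  have hq : qdet n β t = ∏ i, t i i := by
    rw [qdet, Finset.sum_eq_single (1 : Equiv.Perm (Fin n))]
    · rw [permLength_one, pow_zero, one_smul, ← Fin.prod_univ_def]
      simp
    · intro σ _ hσ
      rw [← Fin.prod_univ_def]
      obtain ⟨l, m, hlm, hinvr⟩ := exists_inversion σ hσ
      have h0 : t (σ m) m * t (σ l) l = 0 := hanti _ _ _ _ hinvr hlm
      rcases mul_eq_zero.mp h0 with h | h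
      · have hz : (∏ i : Fin n, t (σ i) i) = 0 := Finset.prod_eq_zero (Finset.mem_univ m) h
        rw [hz, smul_zero]
      · have hz : (∏ i : Fin n, t (σ i) i) = 0 := Finset.prod_eq_zero (Finset.mem_univ l) h
        rw [hz, smul_zero]
    · simp
  have hprod : (∏ i, t i i) ≠ 0 := hq ▸ hu.ne_zero
  have hdiag : ∀ i, t i i ≠ 0 := fun i h =>
    hprod (Finset.prod_eq_zero (Finset.mem_univ i) h)
  refine ⟨fun i j hij => ?_, hdiag⟩
  rcases lt_or_gt_of_ne hij with h | h
  · exact (mul_eq_zero.mp (hrow i i j h)).resolve_left (hdiag i)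
  · exact (mul_eq_zero.mp (hrow i j i h)).resolve_right (hdiag i)

/-- `A` (with the family `x`) is "the" quantized coordinate algebra `O_{α,β}(GL_n)`:
the generators satisfy the quantum matrix relations, the quantum determinant is
invertible, and `A` has the corresponding universal property (which determines
`O_{α,β}(GL_n) = O_{α,β}(M_n)[g⁻¹]` up to unique isomorphism). -/
def IsQGL {k : Type u} [Field k] {A : Type v} [Ring A] [Algebra k A]
    (n : ℕ) (α β : k) (x : Fin n → Fin n → A) : Prop :=
  QMRel n α β x ∧ IsUnit (qdet n β x) ∧
  ∀ (B : Type v) [Ring B] [Algebra k B] (y : Fin n → Fin n → B),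
    QMRel n α β y → IsUnit (qdet n β y) →
      ∃! φ : A →ₐ[k] B, ∀ i j, φ (x i j) = y i j

/-- The convolution product of two characters of a bialgebra `O`:
`(θ ⋆ θ')(z) = θ(z₍₁₎) θ'(z₍₂₎)`. -/
def convChar {k : Type u} [Field k] {O : Type v} [Ring O] [Bialgebra k O]
    (θ θ' : O →ₐ[k] k) : O →ₐ[k] k :=
  (Algebra.TensorProduct.lmul' k).comp
    ((Algebra.TensorProduct.map θ θ').comp (Bialgebra.comulAlgHom k O))

/-- assuming `α ≠ 1`, `β ≠ 1` and `α ≠ β`, every character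
`θ : O_{α,β}(GL_n) → k` kills the off-diagonal generators and is nonzero on the diagonal
ones, and `Λ ↦ (x_{ij} ↦ δ_{ij} Λ_i)` is a group isomorphism from the diagonal torus
`(kˣ)ⁿ` onto the group of characters of `O_{α,β}(GL_n)` with the convolution product. -/
theorem characters_of_quantum_GL
    {k : Type u} [Field k] [IsAlgClosed k] [CharZero k]
    {O : Type v} [Ring O] [Bialgebra k O]
    (n : ℕ) (hn : 0 < n) (α β : k) (hα : α ≠ 0) (hβ : β ≠ 0)
    (hα1 : α ≠ 1) (hβ1 : β ≠ 1) (hαβ : α ≠ β)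
    (x : Fin n → Fin n → O)
    (hcomul : ∀ i j, Coalgebra.comul (R := k) (x i j) = ∑ s : Fin n, x i s ⊗ₜ[k] x s j)
    (hcounit : ∀ i j, Coalgebra.counit (R := k) (x i j) = if i = j then (1 : k) else 0)
    (hqgl : IsQGL n α β x) :
    (∀ θ : O →ₐ[k] k, (∀ i j : Fin n, i ≠ j → θ (x i j) = 0) ∧ ∀ i : Fin n, θ (x i i) ≠ 0) ∧
    ∃ Φ : (Fin n → kˣ) → (O →ₐ[k] k),
      (∀ (Λ : Fin n → kˣ) (i j : Fin n), Φ Λ (x i j) = if i = j then (Λ i : k) else 0) ∧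
      Function.Bijective Φ ∧
      ∀ Λ Λ' : Fin n → kˣ, Φ (Λ * Λ') = convChar (Φ Λ) (Φ Λ') := by
  obtain ⟨hrel, hdet, huniv⟩ := hqgl
  -- Part 1
  have part1 : ∀ θ : O →ₐ[k] k,
      (∀ i j : Fin n, i ≠ j → θ (x i j) = 0) ∧ ∀ i : Fin n, θ (x i i) ≠ 0 := by
    intro θ
    have ht : QMRel n α β (fun i j => θ (x i j)) := map_QMRel θ hrel
    have hu : IsUnit (qdet n β (fun i j => θ (x i j))) := by
      rw [← map_qdet x θ]; exact hdet.map θ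
    exact char_diag hα1 hαβ ht hu
  refine ⟨part1, ?_⟩
  -- a Type v model of k
  haveI : Nontrivial O := (Bialgebra.counitAlgHom k O).toRingHom.domain_nontrivial
  let e : (⊥ : Subalgebra k O) ≃ₐ[k] k := Algebra.botEquiv k O
  -- key existence & uniqueness of characters with prescribed generator values
  have key : ∀ y : Fin n → Fin n → k, QMRel n α β y → IsUnit (qdet n β y) →
      ∃! θ : O →ₐ[k] k, ∀ i j, θ (x i j) = y i j := by
    intro y hy hyu
    have hyQ : QMRel n α β (fun i j => e.symm (y i j)) := map_QMRel e.symm hy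
    have hyQu : IsUnit (qdet n β (fun i j => e.symm (y i j))) := by
      rw [← map_qdet y e.symm]; exact hyu.map e.symm
    obtain ⟨φ, hφ, huq⟩ := huniv (⊥ : Subalgebra k O) (fun i j => e.symm (y i j)) hyQ hyQu
    refine ⟨e.toAlgHom.comp φ, fun i j => ?_, fun θ' hθ' => ?_⟩
    · simp [hφ i j]
    · have h1 : e.symm.toAlgHom.comp θ' = φ :=
        huq _ (fun i j => by simp [hθ' i j])
      have h2 : θ' = e.toAlgHom.comp (e.symm.toAlgHom.comp θ') := by
        ext z
        simp
      rw [h2, h1]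
  have hDrel : ∀ Λ : Fin n → kˣ,
      QMRel n α β (fun i j => if i = j then (Λ i : k) else 0) :=
    fun Λ => diag_QMRel n α β _
  have hDdet : ∀ Λ : Fin n → kˣ,
      IsUnit (qdet n β (fun i j => if i = j then (Λ i : k) else 0)) := by
    intro Λ
    rw [diag_qdet]
    have : ((∏ i, Λ i : kˣ) : k) = ∏ i, (Λ i : k) := Units.coe_prod Λ Finset.univ
    rw [← this]
    exact (∏ i, Λ i).isUnit
  choose Φ hΦ hΦu using fun Λ : Fin n → kˣ =>
    key (fun i j => if i = j then (Λ i : k) else 0) (hDrel Λ) (hDdet Λ)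
  have hconv : ∀ (θ θ' : O →ₐ[k] k) (i j : Fin n),
      convChar θ θ' (x i j) = ∑ s, θ (x i s) * θ' (x s j) := by
    intro θ θ' i j
    simp [convChar, Bialgebra.comulAlgHom_apply, hcomul i j, map_sum,
      Algebra.TensorProduct.map_tmul, Algebra.TensorProduct.lmul'_apply_tmul]
  refine ⟨Φ, hΦ, ⟨?_, ?_⟩, ?_⟩
  · -- injective
    intro Λ Λ' h
    funext i
    ext
    have h1 := hΦ Λ i i
    have h2 := hΦ Λ' i i
    rw [if_pos rfl] at h1 h2
    rw [← h1, ← h2, h]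
  · -- surjective
    intro θ
    obtain ⟨hoff, hdiag⟩ := part1 θ
    refine ⟨fun i => Units.mk0 (θ (x i i)) (hdiag i), (hΦu _ θ fun i j => ?_).symm⟩
    by_cases hij : i = j
    · subst hij; simp
    · simp [hij, hoff i j hij]
  · -- group homomorphism
    intro Λ Λ'
    refine (hΦu (Λ * Λ') (convChar (Φ Λ) (Φ Λ')) fun i j => ?_).symm
    rw [hconv, Finset.sum_congr rfl fun s _ => by rw [hΦ Λ i s, hΦ Λ' s j]]
    simp only [ite_mul, zero_mul, mul_ite, mul_zero, Pi.mul_apply, Units.val_mul]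
    rw [Finset.sum_ite_eq' Finset.univ j]
    simp only [Finset.mem_univ, if_true]
    by_cases hij : i = j <;> simp [hij]
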